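/- Let s_1 ≥ s_2 ≥ … ≥ s_n be reals with s_1 ≥ 0, and let k* ∈ argmax_{k ∈ [n]} k·s_k. Then ∑_{i=1}^n max(s_i, 0) ≤ (k*·s_{k*}) · ∑_{i=1}^n 1/i. In particular the sum of positive parts is at most H_n times the maximum of k·s_k. -/

import Mathlib

theorem sum_pos_part_le_harmonic (n : ℕ) (hn : 1 ≤ n) (s : ℕ → ℝ)
    (hsorted : ∀ i j, 1 ≤ i → i ≤ j → j ≤ n → s j ≤ s i) (hs1 : 0 ≤ s 1)
    (kstar : ℕ) (hk : kstar ∈ Finset.Icc 1 n)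
    (hmax : ∀ k ∈ Finset.Icc 1 n, (k : ℝ) * s k ≤ (kstar : ℝ) * s kstar) :
    ∑ i ∈ Finset.Icc 1 n, max (s i) 0 ≤
      ((kstar : ℝ) * s kstar) * ∑ i ∈ Finset.Icc 1 n, (1 : ℝ) / i := by
  have hM : 0 ≤ (kstar : ℝ) * s kstar := by
    have h1 := hmax 1 (Finset.mem_Icc.mpr ⟨le_refl 1, hn⟩)
    simpa using le_trans hs1 (by simpa using h1)
  rw [Finset.mul_sum]
  apply Finset.sum_le_sum
  intro i hi
  obtain ⟨h1, h2⟩ := Finset.mem_Icc.mp hi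
  have hi0 : (0:ℝ) < i := by exact_mod_cast h1
  rcases le_or_gt 0 (s i) with h | h
  · rw [max_eq_left h]
    have hm := hmax i hi
    rw [mul_one_div, le_div_iff₀ hi0]
    nlinarith
  · rw [max_eq_right h.le]
    positivity
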